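/- Let f : ℝⁿ → ℝ be differentiable and L-smooth with L > 0, let g(x) = Σ_{i=1}^n g_i(x_i), set F := f + g, let x* be a global minimizer of F, ξ(x) := F(x) − F(x*), and define λ(x) := −L·inf_{y ∈ ℝⁿ} { ⟨∇f(x), y⟩ + (L/2)‖y‖² + g(x+y) − g(x) }. Let x⁰ ∈ ℝⁿ and assume F is weakly PL with constant ρ > 0 relative to x⁰, i.e. λ(x) ≥ ρ·ξ(x)² for every x ∈ ℝⁿ with ξ(x) ≤ ξ(x⁰). Let x^{k+1} := x^k + (u^k)_{[S_k]}, where S_k ⊆ {1,…,n} is nonempty and u^k ∈ ℝⁿ, and suppose there is c > 0 such that for every k < K one has −U_{S_k}(x^k, u^k) ≥ c·λ(x^k). Then ξ(x^K) ≤ ξ(x⁰) / (1 + ξ(x⁰)·ρ·c·K). -/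

import Mathlib

open scoped RealInnerProductSpace BigOperators

/-- The quantity `λ(x) = -L · inf_y { ⟨∇f(x),y⟩ + (L/2)‖y‖² + g(x+y) - g(x) }`. -/
noncomputable def lamFun {n : ℕ} (f g : EuclideanSpace ℝ (Fin n) → ℝ) (L : ℝ)
    (x : EuclideanSpace ℝ (Fin n)) : ℝ :=
  -L * sInf (Set.range fun y : EuclideanSpace ℝ (Fin n) =>
    ⟪gradient f x, y⟫ + L / 2 * ‖y‖ ^ 2 + g (x + y) - g x)

/-- The masked vector `u_{[S]}`. -/
noncomputable def maskVec {n : ℕ} (S : Finset (Fin n)) (u : EuclideanSpace ℝ (Fin n)) :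
    EuclideanSpace ℝ (Fin n) :=
  (EuclideanSpace.equiv (Fin n) ℝ).symm fun i => if i ∈ S then u i else 0

/-- The block upper bound `U_S(x, u)` with `M = L·I`. -/
noncomputable def USFun {n : ℕ} (f : EuclideanSpace ℝ (Fin n) → ℝ) (gi : Fin n → ℝ → ℝ)
    (L : ℝ) (S : Finset (Fin n)) (x u : EuclideanSpace ℝ (Fin n)) : ℝ :=
  (∑ i ∈ S, gradient f x i * u i) + L / 2 * (∑ i ∈ S, u i ^ 2) +
    ∑ i ∈ S, (gi i (x i + u i) - gi i (x i))

lemma maskVec_apply {n : ℕ} (S : Finset (Fin n)) (u : EuclideanSpace ℝ (Fin n)) (i : Fin n) :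
    maskVec S u i = if i ∈ S then u i else 0 := rfl

theorem weakly_PL_block_descent_rate {n : ℕ} (f g : EuclideanSpace ℝ (Fin n) → ℝ)
    (gi : Fin n → ℝ → ℝ) (L ρ c : ℝ) (hL : 0 < L) (hρ : 0 < ρ) (hc : 0 < c)
    (hdiff : Differentiable ℝ f)
    (hsmooth : ∀ x h : EuclideanSpace ℝ (Fin n),
      f (x + h) ≤ f x + ⟪gradient f x, h⟫ + L / 2 * ‖h‖ ^ 2)
    (hg : ∀ x : EuclideanSpace ℝ (Fin n), g x = ∑ i, gi i (x i))
    (xstar : EuclideanSpace ℝ (Fin n)) (hmin : ∀ y, f xstar + g xstar ≤ f y + g y)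
    (X : ℕ → EuclideanSpace ℝ (Fin n)) (S : ℕ → Finset (Fin n))
    (u : ℕ → EuclideanSpace ℝ (Fin n))
    (hWPL : ∀ x : EuclideanSpace ℝ (Fin n),
      f x + g x - (f xstar + g xstar) ≤ f (X 0) + g (X 0) - (f xstar + g xstar) →
      ρ * (f x + g x - (f xstar + g xstar)) ^ 2 ≤ lamFun f g L x)
    (hSne : ∀ k, (S k).Nonempty)
    (hiter : ∀ k : ℕ, X (k + 1) = X k + maskVec (S k) (u k))
    (K : ℕ)
    (hprog : ∀ k < K, c * lamFun f g L (X k) ≤ -USFun f gi L (S k) (X k) (u k)) :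
    f (X K) + g (X K) - (f xstar + g xstar) ≤
      (f (X 0) + g (X 0) - (f xstar + g xstar)) /
        (1 + (f (X 0) + g (X 0) - (f xstar + g xstar)) * ρ * c * K) := by
  set xi : ℕ → ℝ := fun k => f (X k) + g (X k) - (f xstar + g xstar) with hxi
  have hxinn : ∀ k, 0 ≤ xi k := by
    intro k
    have := hmin (X k)
    simp only [hxi]
    linarith
  -- bounded below
  have hbdd : ∀ x : EuclideanSpace ℝ (Fin n), BddBelow (Set.range fun y :
      EuclideanSpace ℝ (Fin n) => ⟪gradient f x, y⟫ + L / 2 * ‖y‖ ^ 2 + g (x + y) - g x) := by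
    intro x
    refine ⟨f xstar + g xstar - (f x + g x), ?_⟩
    rintro _ ⟨y, rfl⟩
    have h1 := hsmooth x y
    have h2 := hmin (x + y)
    linarith
  have hlam_nonneg : ∀ x, 0 ≤ lamFun f g L x := by
    intro x
    have h0 : (0 : ℝ) ∈ Set.range fun y : EuclideanSpace ℝ (Fin n) =>
        ⟪gradient f x, y⟫ + L / 2 * ‖y‖ ^ 2 + g (x + y) - g x := ⟨0, by simp⟩
    have hle := csInf_le (hbdd x) h0
    unfold lamFun
    nlinarith
  -- descent lemma for the surrogate
  have hdesc : ∀ k, f (X (k + 1)) + g (X (k + 1)) ≤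
      f (X k) + g (X k) + USFun f gi L (S k) (X k) (u k) := by
    intro k
    rw [hiter k]
    set x := X k with hx
    set h := maskVec (S k) (u k) with hh
    have hinner : ⟪gradient f x, h⟫ = ∑ i ∈ S k, gradient f x i * u k i := by
      rw [PiLp.inner_apply]
      simp only [RCLike.inner_apply, conj_trivial, hh, maskVec_apply, mul_ite, mul_zero, ite_mul, zero_mul]
      rw [Finset.sum_ite_mem, Finset.univ_inter]
      exact Finset.sum_congr rfl fun i _ => mul_comm _ _
    have hnorm : ‖h‖ ^ 2 = ∑ i ∈ S k, u k i ^ 2 := by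
      rw [← real_inner_self_eq_norm_sq, PiLp.inner_apply]
      simp only [RCLike.inner_apply, conj_trivial, hh, maskVec_apply]
      have key : ∀ i : Fin n, (if i ∈ S k then u k i else 0) * (if i ∈ S k then u k i else 0)
          = (if i ∈ S k then u k i ^ 2 else 0) := by
        intro i; by_cases hi : i ∈ S k <;> simp [hi, sq]
      rw [Finset.sum_congr rfl fun i _ => key i, Finset.sum_ite_mem, Finset.univ_inter]
    have hgsum : g (x + h) = g x + ∑ i ∈ S k, (gi i (x i + u k i) - gi i (x i)) := by
      rw [hg, hg]
      have key : ∀ i : Fin n, gi i ((x + h) i) =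
          gi i (x i) + (if i ∈ S k then gi i (x i + u k i) - gi i (x i) else 0) := by
        intro i
        have hadd : (x + h) i = x i + h i := rfl
        by_cases hi : i ∈ S k <;> simp [hadd, hh, maskVec_apply, hi]
      rw [Finset.sum_congr rfl fun i _ => key i, Finset.sum_add_distrib,
        Finset.sum_ite_mem, Finset.univ_inter]
    have h1 := hsmooth x h
    rw [hinner, hnorm] at h1
    unfold USFun
    rw [hgsum]
    linarith
  have hstep : ∀ k < K, xi (k + 1) ≤ xi k - c * lamFun f g L (X k) := by
    intro k hk
    have h1 := hdesc k
    have h2 := hprog k hk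
    simp only [hxi]
    linarith
  have hdec : ∀ k < K, xi (k + 1) ≤ xi k := by
    intro k hk
    have h1 := hstep k hk
    have h2 := hlam_nonneg (X k)
    nlinarith
  have hchain : ∀ k, k ≤ K → ∀ j, j ≤ k → xi k ≤ xi j := by
    intro k
    induction k with
    | zero => intro _ j hj; interval_cases j; exact le_refl _
    | succ m ih =>
      intro hk j hj
      rcases Nat.lt_or_ge j (m + 1) with hj' | hj'
      · have h1 := hdec m hk
        have h2 := ih (Nat.le_of_succ_le hk) j (Nat.lt_succ_iff.mp hj')
        linarith
      · have : j = m + 1 := le_antisymm hj hj'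
        rw [this]
  have hrec : ∀ k < K, xi (k + 1) ≤ xi k - c * (ρ * xi k ^ 2) := by
    intro k hk
    have hWk : ρ * xi k ^ 2 ≤ lamFun f g L (X k) := by
      have hle0 : xi k ≤ xi 0 := hchain k (le_of_lt hk) 0 (Nat.zero_le k)
      exact hWPL (X k) hle0
    have h1 := hstep k hk
    nlinarith
  by_cases hK : 0 < xi K
  · have hpos : ∀ k ≤ K, 0 < xi k := fun k hk =>
      lt_of_lt_of_le hK (hchain K le_rfl k hk)
    have h0pos : 0 < xi 0 := hpos 0 (Nat.zero_le K)
    have hinv : ∀ k, k ≤ K → (xi 0)⁻¹ + ρ * c * k ≤ (xi k)⁻¹ := by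
      intro k
      induction k with
      | zero => intro _; simp
      | succ m ih =>
        intro hk
        have hmK : m < K := hk
        have h1 := ih (le_of_lt hmK)
        have hpm := hpos m (le_of_lt hmK)
        have hpm1 := hpos (m + 1) hk
        have hrec' := hrec m hmK
        have hdecm := hdec m hmK
        have key : c * ρ ≤ (xi (m + 1))⁻¹ - (xi m)⁻¹ := by
          have hq : (xi (m + 1))⁻¹ - (xi m)⁻¹ =
              (xi m - xi (m + 1)) / (xi (m + 1) * xi m) :=
            inv_sub_inv (ne_of_gt hpm1) (ne_of_gt hpm)
          rw [hq, le_div_iff₀ (by positivity)]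
          nlinarith
        push_cast
        linarith
    have hKinv := hinv K le_rfl
    have eK : xi K * (xi K)⁻¹ = 1 := mul_inv_cancel₀ (ne_of_gt hK)
    have e0 : xi 0 * (xi 0)⁻¹ = 1 := mul_inv_cancel₀ (ne_of_gt h0pos)
    have hden : 0 < 1 + xi 0 * ρ * c * K := by
      have : (0:ℝ) ≤ xi 0 * ρ * c * K := by positivity
      linarith
    show xi K ≤ xi 0 / (1 + xi 0 * ρ * c * K)
    rw [le_div_iff₀ hden]
    have hmul : xi K * ((xi 0)⁻¹ + ρ * c * K) ≤ xi K * (xi K)⁻¹ :=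
      mul_le_mul_of_nonneg_left hKinv (le_of_lt hK)
    rw [eK] at hmul
    have h2 : xi 0 * (xi K * ((xi 0)⁻¹ + ρ * c * ↑K)) ≤ xi 0 * 1 :=
      mul_le_mul_of_nonneg_left hmul (le_of_lt h0pos)
    have h3 : xi 0 * xi K * (xi 0)⁻¹ = xi K := by field_simp
    revert h2 h3
    generalize xi 0 = a
    generalize xi K = b
    intro h2 h3
    nlinarith [h2, h3]
  · have hz : xi K = 0 := le_antisymm (not_lt.mp hK) (hxinn K)
    show xi K ≤ xi 0 / (1 + xi 0 * ρ * c * K)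
    rw [hz]
    have hnum := hxinn 0
    have hden : (0:ℝ) ≤ 1 + xi 0 * ρ * c * K := by
      have : (0:ℝ) ≤ xi 0 * ρ * c * K := by positivity
      linarith
    exact div_nonneg hnum hden
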